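/- Let α, β, γ, k be real numbers and d₁₁, d₂₂, d₃₃ > 0 such that sinh(kα), sinh((1−k)α), sinh(kβ), sinh((1−k)β), sinh(kγ), sinh((1−k)γ) are all nonzero. Define R(k) := (√d₁₁·sinh(kα)/sinh((1−k)α), √d₂₂·sinh(kβ)/sinh((1−k)β), √d₃₃·sinh(kγ)/sinh((1−k)γ)), and define the isogonal conjugation ι(x₁,x₂,x₃) := (d₁₁·x₂x₃, d₂₂·x₃x₁, d₃₃·x₁x₂). Then ι(R(k)) is a nonzero scalar multiple of R(1−k); i.e., the isogonal conjugate of the Hofstadter k-point is the Hofstadter (1−k)-point. -/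

import Mathlib

open Real

/-- The isogonal conjugate of the Hofstadter `k`-point is the Hofstadter `(1−k)`-point. -/
theorem stmt_17 (α β γ k : ℝ) (d₁₁ d₂₂ d₃₃ : ℝ)
    (hd₁ : 0 < d₁₁) (hd₂ : 0 < d₂₂) (hd₃ : 0 < d₃₃)
    (h1 : Real.sinh (k * α) ≠ 0) (h2 : Real.sinh ((1 - k) * α) ≠ 0)
    (h3 : Real.sinh (k * β) ≠ 0) (h4 : Real.sinh ((1 - k) * β) ≠ 0)
    (h5 : Real.sinh (k * γ) ≠ 0) (h6 : Real.sinh ((1 - k) * γ) ≠ 0)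
    (R : ℝ → Fin 3 → ℝ)
    (hR : ∀ t : ℝ, R t = ![Real.sqrt d₁₁ * Real.sinh (t * α) / Real.sinh ((1 - t) * α),
                           Real.sqrt d₂₂ * Real.sinh (t * β) / Real.sinh ((1 - t) * β),
                           Real.sqrt d₃₃ * Real.sinh (t * γ) / Real.sinh ((1 - t) * γ)])
    (ι : (Fin 3 → ℝ) → Fin 3 → ℝ)
    (hι : ∀ v : Fin 3 → ℝ, ι v = ![d₁₁ * v 1 * v 2, d₂₂ * v 2 * v 0, d₃₃ * v 0 * v 1]) :
    ∃ μ : ℝ, μ ≠ 0 ∧ ι (R k) = μ • R (1 - k) := by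
  have s1 : Real.sqrt d₁₁ ≠ 0 := ne_of_gt (Real.sqrt_pos.mpr hd₁)
  have s2 : Real.sqrt d₂₂ ≠ 0 := ne_of_gt (Real.sqrt_pos.mpr hd₂)
  have s3 : Real.sqrt d₃₃ ≠ 0 := ne_of_gt (Real.sqrt_pos.mpr hd₃)
  have e1 : Real.sqrt d₁₁ * Real.sqrt d₁₁ = d₁₁ := Real.mul_self_sqrt hd₁.le
  have e2 : Real.sqrt d₂₂ * Real.sqrt d₂₂ = d₂₂ := Real.mul_self_sqrt hd₂.le
  have e3 : Real.sqrt d₃₃ * Real.sqrt d₃₃ = d₃₃ := Real.mul_self_sqrt hd₃.le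
  refine ⟨Real.sqrt d₁₁ * Real.sqrt d₂₂ * Real.sqrt d₃₃ *
    (Real.sinh (k * α) * Real.sinh (k * β) * Real.sinh (k * γ)) /
    (Real.sinh ((1 - k) * α) * Real.sinh ((1 - k) * β) * Real.sinh ((1 - k) * γ)), ?_, ?_⟩
  · intro h
    simp only [div_eq_zero_iff, mul_eq_zero] at h
    simp_all
  · funext i
    have h7 : (1 : ℝ) - (1 - k) = k := by ring
    rw [hι, hR, hR, h7]
    fin_cases i <;> simp [Matrix.cons_val_zero, Matrix.cons_val_one] <;> field_simp
    · rw [Real.sq_sqrt hd₁.le]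
    · rw [Real.sq_sqrt hd₂.le]
    · rw [Real.sq_sqrt hd₃.le]
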